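/- Let ε ∈ ℝ and let u : ℝ × ℝ → ℂ be such that u(t, x + 2π) = u(t, x) for all t, x, u is continuously differentiable in t, twice continuously differentiable in x, with ∂u/∂t and ∂²u/∂x² jointly continuous, and suppose ∂u/∂t (t,x) = ∂²u/∂x² (t,x) + ε · u(t,x)² for all t ∈ [0,1] and x ∈ ℝ. For n ∈ ℤ define c_n(t) := (1/(2π)) ∫_{−π}^{π} u(t,x) e^{−i n x} dx, and assume that for each t ∈ [0,1] the family (c_n(t))_{n∈ℤ} is absolutely summable with ∑_{n} |c_n(t)| uniformly bounded in t. Then for all ℓ, k ∈ ℕ and n₁, …, n_k ∈ ℤ: ∏_{j=1}^k c_{n_j}(1) − 0^ℓ ∏_{j=1}^k c_{n_j}(0) = ∫₀¹ ℓ t^{ℓ−1} ∏_{j=1}^k c_{n_j}(t) dt − Σ_{j=1}^k n_j² ∫₀¹ t^ℓ ∏_{j=1}^k c_{n_j}(t) dt + ε Σ_{j=1}^k Σ_{m ∈ ℤ} ∫₀¹ t^ℓ ( ∏_{i≠j} c_{n_i}(t) ) · c_m(t) · c_{n_j − m}(t) dt, where 0⁰ = 1 and the term ℓ t^{ℓ−1}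 vanishes identically when ℓ = 0. -/

import Mathlib

/-- The `n`-th Fourier coefficient of `u(t,·)`:
`c_n(t) = (1/(2π)) ∫_{-π}^{π} u(t,x) e^{-inx} dx`. -/
noncomputable def fourierCoeffHeat (u : ℝ × ℝ → ℂ) (n : ℤ) (t : ℝ) : ℂ :=
  (2 * (Real.pi : ℂ))⁻¹ *
    ∫ x in (-Real.pi)..Real.pi, u (t, x) * Complex.exp (-Complex.I * (n : ℂ) * (x : ℂ))

open MeasureTheory Complex Real Filter Set intervalIntegral

noncomputable def ee (n : ℤ) (x : ℝ) : ℂ := Complex.exp (-Complex.I * (n:ℂ) * (x:ℂ))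

lemma norm_ee (n : ℤ) (x : ℝ) : ‖ee n x‖ = 1 := by
  rw [ee, Complex.norm_exp]; simp

lemma continuous_ee (n : ℤ) : Continuous (ee n) := by
  unfold ee; fun_prop

lemma hasDerivAt_ee (n : ℤ) (x : ℝ) :
    HasDerivAt (ee n) (-Complex.I * (n:ℂ) * ee n x) x := by
  have h : HasDerivAt (fun y : ℝ => -Complex.I * (n:ℂ) * (y:ℂ)) (-Complex.I * (n:ℂ)) x := by
    simpa using (Complex.ofRealCLM.hasDerivAt (x := x)).const_mul (-Complex.I * (n:ℂ))
  have he : ee n = fun x : ℝ => Complex.exp (-Complex.I * (n:ℂ) * (x:ℂ)) := rfl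
  rw [he]
  simpa [neg_mul, mul_neg, mul_comm, mul_left_comm, mul_assoc] using h.cexp

lemma ee_pi (n : ℤ) : ee n π = ee n (-π) := by
  rw [ee, ee, show ((-π:ℝ):ℂ) = -(π:ℂ) by push_cast; ring,
    show -Complex.I * (n:ℂ) * -(π:ℂ) = -Complex.I * (n:ℂ) * (π:ℂ) + (n:ℂ) * (2*π*Complex.I) by
      push_cast; ring,
    Complex.exp_add, Complex.exp_int_mul_two_pi_mul_I, mul_one]

/-- Differentiation under the integral sign for Fourier-type coefficients. -/
lemma hasDerivAt_coeff (v vt : ℝ × ℝ → ℂ) (hv : Continuous v) (hvt : Continuous vt)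
    (hd : ∀ t x : ℝ, HasDerivAt (fun s => v (s, x)) (vt (t, x)) t) (n : ℤ) (t₀ : ℝ) :
    HasDerivAt (fun t => ∫ x in (-π)..π, v (t, x) * ee n x)
      (∫ x in (-π)..π, vt (t₀, x) * ee n x) t₀ := by
  obtain ⟨M, hM⟩ : ∃ M, ∀ p ∈ Set.Icc (t₀ - 1) (t₀ + 1) ×ˢ Set.Icc (-π) π, ‖vt p‖ ≤ M :=
    (IsCompact.exists_bound_of_continuousOn (isCompact_Icc.prod isCompact_Icc)
      hvt.continuousOn)
  have key := intervalIntegral.hasDerivAt_integral_of_dominated_loc_of_deriv_le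
    (F := fun t x => v (t, x) * ee n x) (F' := fun t x => vt (t, x) * ee n x)
    (bound := fun _ => M) (μ := volume) (a := -π) (b := π) (x₀ := t₀) (s := Metric.ball t₀ 1) (Metric.ball_mem_nhds _ one_pos)
    (Eventually.of_forall fun t =>
      ((hv.comp (continuous_const.prodMk continuous_id)).mul (continuous_ee n)).aestronglyMeasurable)
    (((hv.comp (continuous_const.prodMk continuous_id)).mul (continuous_ee n)).intervalIntegrable _ _)
    ((hvt.comp (continuous_const.prodMk continuous_id)).mul (continuous_ee n)).aestronglyMeasurable
    ?_ (intervalIntegrable_const) ?_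
  · exact key.2
  · refine Eventually.of_forall fun x hx t ht => ?_
    rw [norm_mul, norm_ee, mul_one]
    refine hM (t, x) ⟨?_, ?_⟩
    · have := Metric.mem_ball.mp ht
      constructor <;> [skip; skip] <;> (rw [Real.dist_eq] at this; cases' abs_lt.mp this with h1 h2; linarith)
    · have : Set.uIoc (-π) π = Set.Ioc (-π) π := by
        rw [Set.uIoc_of_le (by linarith [Real.pi_pos])]
      rw [this] at hx
      exact ⟨hx.1.le, hx.2⟩
  · exact Eventually.of_forall fun x _ t _ => (hd t x).mul_const (ee n x)

/-- The coefficient of the square term. -/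
noncomputable def qq (u : ℝ × ℝ → ℂ) (n : ℤ) (t : ℝ) : ℂ :=
  (2 * (Real.pi : ℂ))⁻¹ * ∫ x in (-π)..π, (u (t, x)) ^ 2 * ee n x

lemma fch_eq (u : ℝ × ℝ → ℂ) (n : ℤ) (t : ℝ) :
    fourierCoeffHeat u n t = (2 * (Real.pi : ℂ))⁻¹ * ∫ x in (-π)..π, u (t, x) * ee n x := rfl

section main
variable {ε : ℝ} {u ut ux uxx : ℝ × ℝ → ℂ}

lemma ux_periodic (hper : ∀ t x : ℝ, u (t, x + 2 * π) = u (t, x))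
    (hdx : ∀ t x : ℝ, HasDerivAt (fun y => u (t, y)) (ux (t, x)) x) (t x : ℝ) :
    ux (t, x + 2 * π) = ux (t, x) := by
  have h1 : HasDerivAt (fun y => u (t, y + 2 * π)) (ux (t, x + 2 * π)) x := by
    exact HasDerivAt.comp_add_const x (2 * π) (hdx t (x + 2 * π))
  have h2 : HasDerivAt (fun y => u (t, y + 2 * π)) (ux (t, x)) x := by
    have he : (fun y => u (t, y + 2 * π)) = fun y => u (t, y) := funext fun y => hper t y
    rw [he]; exact hdx t x
  exact h1.unique h2

/-- One integration by parts. -/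
lemma ibp_step (v vx : ℝ × ℝ → ℂ) (hvx : Continuous vx)
    (hd : ∀ x : ℝ, HasDerivAt (fun y => v (t₀, y)) (vx (t₀, x)) x)
    (hv : Continuous v)
    (hbd : v (t₀, π) = v (t₀, -π)) (n : ℤ) :
    ∫ x in (-π)..π, vx (t₀, x) * ee n x
      = (Complex.I * (n : ℂ)) * ∫ x in (-π)..π, v (t₀, x) * ee n x := by
  have h := intervalIntegral.integral_mul_deriv_eq_deriv_mul
    (a := -π) (b := π) (u := ee n) (u' := fun x => -Complex.I * (n:ℂ) * ee n x)
    (v := fun x => v (t₀, x)) (v' := fun x => vx (t₀, x))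
    (fun x _ => hasDerivAt_ee n x) (fun x _ => hd x)
    ((continuous_const.mul (continuous_ee n)).intervalIntegrable _ _)
    ((hvx.comp (continuous_const.prodMk continuous_id)).intervalIntegrable _ _)
  have hflip : ∫ x in (-π)..π, vx (t₀, x) * ee n x
      = ∫ x in (-π)..π, ee n x * vx (t₀, x) := by
    simp_rw [mul_comm]
  have hflip2 : ∫ x in (-π)..π, (-Complex.I * (n:ℂ) * ee n x) * v (t₀, x)
      = (-Complex.I * (n:ℂ)) * ∫ x in (-π)..π, v (t₀, x) * ee n x := by
    rw [← intervalIntegral.integral_const_mul]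
    congr 1; funext x; ring
  rw [hflip, h, hflip2, ee_pi]
  beta_reduce
  rw [hbd]; ring

lemma integral_uxx_eq (hper : ∀ t x : ℝ, u (t, x + 2 * π) = u (t, x))
    (hu : Continuous u) (hux : Continuous ux) (huxx : Continuous uxx)
    (hdx : ∀ t x : ℝ, HasDerivAt (fun y => u (t, y)) (ux (t, x)) x)
    (hdxx : ∀ t x : ℝ, HasDerivAt (fun y => ux (t, y)) (uxx (t, x)) x)
    (t : ℝ) (n : ℤ) :
    ∫ x in (-π)..π, uxx (t, x) * ee n x
      = -(n:ℂ)^2 * ∫ x in (-π)..π, u (t, x) * ee n x := by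
  have hb1 : u (t, π) = u (t, -π) := by
    have := hper t (-π); rwa [show -π + 2 * π = π by ring] at this
  have hb2 : ux (t, π) = ux (t, -π) := by
    have := ux_periodic hper hdx t (-π); rwa [show -π + 2 * π = π by ring] at this
  rw [ibp_step ux uxx huxx (fun x => hdxx t x) hux hb2 n,
    ibp_step u ux hux (fun x => hdx t x) hu hb1 n]
  ring_nf
  rw [Complex.I_sq]
  ring

end main

section main2
variable {ε : ℝ} {u ut ux uxx : ℝ × ℝ → ℂ}

lemma hasDerivAt_fch (hu : Continuous u) (hut : Continuous ut)
    (hdt : ∀ t x : ℝ, HasDerivAt (fun s => u (s, x)) (ut (t, x)) t) (n : ℤ) (t₀ : ℝ) :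
    HasDerivAt (fourierCoeffHeat u n)
      ((2 * (Real.pi:ℂ))⁻¹ * ∫ x in (-π)..π, ut (t₀, x) * ee n x) t₀ :=
  (hasDerivAt_coeff u ut hu hut hdt n t₀).const_mul ((2 * (Real.pi:ℂ))⁻¹)

lemma continuous_fch (hu : Continuous u) (hut : Continuous ut)
    (hdt : ∀ t x : ℝ, HasDerivAt (fun s => u (s, x)) (ut (t, x)) t) (n : ℤ) :
    Continuous (fourierCoeffHeat u n) :=
  continuous_iff_continuousAt.2 fun t => (hasDerivAt_fch hu hut hdt n t).continuousAt

lemma hasDerivAt_qq (hu : Continuous u) (hut : Continuous ut)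
    (hdt : ∀ t x : ℝ, HasDerivAt (fun s => u (s, x)) (ut (t, x)) t) (n : ℤ) (t₀ : ℝ) :
    HasDerivAt (qq u n)
      ((2 * (Real.pi:ℂ))⁻¹ *
        ∫ x in (-π)..π, (ut (t₀, x) * u (t₀, x) + u (t₀, x) * ut (t₀, x)) * ee n x) t₀ := by
  have hd2 : ∀ t x : ℝ, HasDerivAt (fun s => u (s, x) * u (s, x))
      (ut (t, x) * u (t, x) + u (t, x) * ut (t, x)) t := fun t x => (hdt t x).mul (hdt t x)
  have h := (hasDerivAt_coeff (fun p => u p * u p) (fun p => ut p * u p + u p * ut p)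
    (hu.mul hu) ((hut.mul hu).add (hu.mul hut)) hd2 n t₀).const_mul ((2 * (Real.pi:ℂ))⁻¹)
  have he : qq u n = fun t => (2 * (Real.pi:ℂ))⁻¹ *
      ∫ x in (-π)..π, (u (t, x) * u (t, x)) * ee n x := by
    funext t; rw [qq]; congr 1
    exact intervalIntegral.integral_congr fun x _ => by rw [sq]
  rw [he]; exact h

lemma continuous_qq (hu : Continuous u) (hut : Continuous ut)
    (hdt : ∀ t x : ℝ, HasDerivAt (fun s => u (s, x)) (ut (t, x)) t) (n : ℤ) :
    Continuous (qq u n) :=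
  continuous_iff_continuousAt.2 fun t => (hasDerivAt_qq hu hut hdt n t).continuousAt

lemma hasDerivAt_c_ode
    (hper : ∀ t x : ℝ, u (t, x + 2 * π) = u (t, x))
    (hu : Continuous u) (hux : Continuous ux) (hut : Continuous ut) (huxx : Continuous uxx)
    (hdt : ∀ t x : ℝ, HasDerivAt (fun s => u (s, x)) (ut (t, x)) t)
    (hdx : ∀ t x : ℝ, HasDerivAt (fun y => u (t, y)) (ux (t, x)) x)
    (hdxx : ∀ t x : ℝ, HasDerivAt (fun y => ux (t, y)) (uxx (t, x)) x)
    (hpde : ∀ t ∈ Set.Icc (0:ℝ) 1, ∀ x : ℝ,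
      ut (t, x) = uxx (t, x) + (ε : ℂ) * (u (t, x)) ^ 2)
    (n : ℤ) {t : ℝ} (ht : t ∈ Set.Icc (0:ℝ) 1) :
    HasDerivAt (fourierCoeffHeat u n)
      (-(n:ℂ)^2 * fourierCoeffHeat u n t + (ε:ℂ) * qq u n t) t := by
  have h := hasDerivAt_fch hu hut hdt n t
  have e1 : (∫ x in (-π)..π, ut (t, x) * ee n x)
      = (∫ x in (-π)..π, uxx (t, x) * ee n x)
        + (ε:ℂ) * ∫ x in (-π)..π, (u (t, x))^2 * ee n x := by
    rw [intervalIntegral.integral_congr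
      (g := fun x => uxx (t, x) * ee n x + (ε:ℂ) * ((u (t, x))^2 * ee n x))
      (fun x _ => by rw [hpde t ht x]; ring)]
    have i1 : IntervalIntegrable (fun x => uxx (t, x) * ee n x) volume (-π) π :=
      ((huxx.comp (continuous_const.prodMk continuous_id)).mul (continuous_ee n)).intervalIntegrable _ _
    have i2 : IntervalIntegrable (fun x => (ε:ℂ) * ((u (t, x))^2 * ee n x)) volume (-π) π :=
      (continuous_const.mul (((hu.comp (continuous_const.prodMk continuous_id)).pow 2).mul
        (continuous_ee n))).intervalIntegrable _ _
    rw [intervalIntegral.integral_add i1 i2, intervalIntegral.integral_const_mul]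
  rw [e1, integral_uxx_eq hper hu hux huxx hdx hdxx t n] at h
  convert h using 1
  rw [fch_eq, qq]
  ring

end main2

section inversion
variable {u : ℝ × ℝ → ℂ}

lemma hasSum_fourier (hper : ∀ t x : ℝ, u (t, x + 2 * π) = u (t, x)) (hu : Continuous u)
    {t : ℝ} (hs : Summable fun m : ℤ => ‖fourierCoeffHeat u m t‖) {x : ℝ}
    (hx : x ∈ Set.Ico (-π) π) :
    HasSum (fun m : ℤ => fourierCoeffHeat u m t * Complex.exp (Complex.I * (m:ℂ) * (x:ℂ)))
      (u (t, x)) := by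
  haveI : Fact (0 < 2 * π) := ⟨by positivity⟩
  have hπ : (π:ℂ) ≠ 0 := Complex.ofReal_ne_zero.mpr Real.pi_ne_zero
  have hbd : u (t, -π) = u (t, -π + 2 * π) := (hper t (-π)).symm
  have hcont : ContinuousOn (fun y => u (t, y)) (Set.Icc (-π) (-π + 2 * π)) :=
    (hu.comp (continuous_const.prodMk continuous_id)).continuousOn
  set F : C(AddCircle (2 * π), ℂ) :=
    ⟨AddCircle.liftIco (2 * π) (-π) (fun y => u (t, y)),
      AddCircle.liftIco_continuous hbd hcont⟩ with hF
  have hne : ∀ᵐ y : ℝ, y ≠ (-π + 2 * π) := by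
    rw [MeasureTheory.ae_iff]
    simp only [not_not, Set.setOf_eq_eq_singleton]
    exact measure_singleton _
  have hcoe : ∀ m : ℤ, fourierCoeff (⇑F) m = fourierCoeffHeat u m t := by
    intro m
    rw [fourierCoeff_eq_intervalIntegral (⇑F) m (-π)]
    have hint : (∫ y in (-π)..(-π + 2 * π), fourier (-m) (y : AddCircle (2 * π)) • F ↑y)
        = ∫ y in (-π)..(-π + 2 * π), u (t, y) * ee m y := by
      refine intervalIntegral.integral_congr_ae ?_
      filter_upwards [hne] with y hyne hyI
      rw [Set.uIoc_of_le (by linarith [Real.pi_pos])] at hyI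
      have hyIco : y ∈ Set.Ico (-π) (-π + 2 * π) :=
        ⟨hyI.1.le, lt_of_le_of_ne hyI.2 hyne⟩
      have h1 : (F : AddCircle (2 * π) → ℂ) ↑y = u (t, y) := by
        simp only [hF, ContinuousMap.coe_mk]
        exact AddCircle.liftIco_coe_apply hyIco
      have h2 : fourier (-m) (y : AddCircle (2 * π)) = ee m y := by
        rw [fourier_coe_apply, ee]
        congr 1
        push_cast
        field_simp
      rw [h1, h2, smul_eq_mul]
      ring
    rw [hint, show -π + 2 * π = π by ring, fch_eq, Complex.real_smul]
    congr 1
    push_cast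
    rw [one_div]
  have hsummable : Summable (fourierCoeff (⇑F)) :=
    (Summable.of_norm hs).congr fun m => (hcoe m).symm
  have hps := has_pointwise_sum_fourier_series_of_summable hsummable (↑x : AddCircle (2 * π))
  have hxIco : x ∈ Set.Ico (-π) (-π + 2 * π) := ⟨hx.1, by linarith [hx.2]⟩
  have hFx : (F : AddCircle (2 * π) → ℂ) ↑x = u (t, x) := by
    simp only [hF, ContinuousMap.coe_mk]
    exact AddCircle.liftIco_coe_apply hxIco
  have hfun : (fun m : ℤ => fourierCoeff (⇑F) m • fourier m (↑x : AddCircle (2 * π)))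
      = fun m : ℤ => fourierCoeffHeat u m t * Complex.exp (Complex.I * (m:ℂ) * (x:ℂ)) := by
    funext m
    rw [hcoe m, smul_eq_mul]
    congr 1
    rw [fourier_coe_apply]
    congr 1
    push_cast
    field_simp
  rw [hfun, hFx] at hps
  exact hps

end inversion

section conv
variable {u : ℝ × ℝ → ℂ}

lemma hasSum_qq (hper : ∀ t x : ℝ, u (t, x + 2 * π) = u (t, x)) (hu : Continuous u)
    {t : ℝ} (hs : Summable fun m : ℤ => ‖fourierCoeffHeat u m t‖) (n : ℤ) :
    HasSum (fun m : ℤ => fourierCoeffHeat u m t * fourierCoeffHeat u (n - m) t)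
      (qq u n t) := by
  have hπpos := Real.pi_pos
  have h2π : (2 * (Real.pi:ℂ)) ≠ 0 := by
    simp [Real.pi_ne_zero, Complex.ofReal_ne_zero]
  obtain ⟨M, hM⟩ : ∃ M, ∀ x ∈ Set.Icc (-π) π, ‖u (t, x)‖ ≤ M :=
    IsCompact.exists_bound_of_continuousOn isCompact_Icc
      ((hu.comp (continuous_const.prodMk continuous_id)).continuousOn)
  set c : ℤ → ℂ := fun m => fourierCoeffHeat u m t with hc
  have hcexp : ∀ m : ℤ, Continuous (fun x : ℝ => Complex.exp (Complex.I * (m:ℂ) * (x:ℂ))) :=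
    fun m => Complex.continuous_exp.comp (continuous_const.mul Complex.continuous_ofReal)
  have hne : ∀ᵐ y : ℝ, y ≠ π := by
    rw [MeasureTheory.ae_iff]
    simp only [not_not, Set.setOf_eq_eq_singleton]
    exact measure_singleton _
  have key := MeasureTheory.hasSum_integral_of_dominated_convergence
    (μ := volume.restrict (Set.Ioc (-π) π))
    (F := fun (m : ℤ) (x : ℝ) => c m * Complex.exp (Complex.I * (m:ℂ) * (x:ℂ)) * (u (t, x) * ee n x))
    (f := fun x => (u (t, x))^2 * ee n x)
    (bound := fun m _ => ‖c m‖ * M)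
    (fun m => (Continuous.aestronglyMeasurable (by
      exact (continuous_const.mul (hcexp m)).mul
        ((hu.comp (continuous_const.prodMk continuous_id)).mul (continuous_ee n)))))
    ?_ ?_ ?_ ?_
  · -- compute each integral and conclude
    have hprod : ∀ (m : ℤ) (x : ℝ), Complex.exp (Complex.I * (m:ℂ) * (x:ℂ)) * ee n x
        = ee (n - m) x := by
      intro m x
      rw [ee, ee, ← Complex.exp_add]
      congr 1
      push_cast
      ring
    have hint : ∀ m : ℤ,
        (∫ x in Set.Ioc (-π) π, c m * Complex.exp (Complex.I * (m:ℂ) * (x:ℂ)) * (u (t, x) * ee n x))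
          = c m * ((2 * (Real.pi:ℂ)) * c (n - m)) := by
      intro m
      have hre : ∀ x : ℝ, c m * Complex.exp (Complex.I * (m:ℂ) * (x:ℂ)) * (u (t, x) * ee n x)
          = c m * (u (t, x) * ee (n - m) x) := by
        intro x
        rw [← hprod m x]
        ring
      simp_rw [hre]
      rw [MeasureTheory.integral_const_mul]
      congr 1
      rw [hc]
      simp only []
      rw [fch_eq, ← mul_assoc, mul_inv_cancel₀ h2π, one_mul,
        intervalIntegral.integral_of_le (by linarith : -π ≤ π)]
    simp_rw [hint] at key
    have key2 := key.mul_left ((2 * (Real.pi:ℂ))⁻¹)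
    have hfe : (fun m : ℤ => (2 * (Real.pi:ℂ))⁻¹ * (c m * ((2 * (Real.pi:ℂ)) * c (n - m))))
        = fun m : ℤ => c m * c (n - m) := by
      funext m
      calc (2 * (Real.pi:ℂ))⁻¹ * (c m * ((2 * (Real.pi:ℂ)) * c (n - m)))
          = ((2 * (Real.pi:ℂ))⁻¹ * (2 * (Real.pi:ℂ))) * (c m * c (n - m)) := by ring
        _ = c m * c (n - m) := by rw [inv_mul_cancel₀ h2π, one_mul]
    rw [hfe] at key2
    have hq : qq u n t = (2 * (Real.pi:ℂ))⁻¹ * ∫ x in Set.Ioc (-π) π, (u (t, x))^2 * ee n x := by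
      rw [qq, intervalIntegral.integral_of_le (by linarith : -π ≤ π)]
    rw [hq]
    exact key2
  · -- bound
    intro m
    rw [MeasureTheory.ae_restrict_iff' measurableSet_Ioc]
    refine MeasureTheory.ae_of_all _ fun x hx => ?_
    have h1 : ‖Complex.exp (Complex.I * (m:ℂ) * (x:ℂ))‖ = 1 := by
      rw [Complex.norm_exp]
      simp
    simp only [norm_mul, h1, norm_ee, mul_one]
    exact mul_le_mul_of_nonneg_left (hM x ⟨hx.1.le, hx.2⟩) (norm_nonneg _)
  · exact MeasureTheory.ae_of_all _ fun x => hs.mul_right M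
  · exact MeasureTheory.integrableOn_const measure_Ioc_lt_top.ne
  · -- pointwise HasSum
    rw [MeasureTheory.ae_restrict_iff' measurableSet_Ioc]
    filter_upwards [hne] with x hxne hx
    have hxIco : x ∈ Set.Ico (-π) π := ⟨hx.1.le, lt_of_le_of_ne hx.2 hxne⟩
    have h := (hasSum_fourier hper hu hs hxIco).mul_right (u (t, x) * ee n x)
    have e : u (t, x) * (u (t, x) * ee n x) = (u (t, x))^2 * ee n x := by ring
    rw [e] at h
    exact h
end conv

section swap
open ENNReal in
lemma integral_tsum_swap
    (c : ℤ → ℝ → ℂ) (q : ℝ → ℂ) (A : ℝ → ℂ) (ℓ : ℕ)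
    (hcont : ∀ m, Continuous (c m)) (hAcont : Continuous A)
    (hs : ∀ t ∈ Set.Icc (0:ℝ) 1, Summable fun m : ℤ => ‖c m t‖)
    (C D : ℝ) (hDnn : 0 ≤ D)
    (hC : ∀ t ∈ Set.Icc (0:ℝ) 1, (∑' m : ℤ, ‖c m t‖) ≤ C)
    (hD : ∀ t ∈ Set.Icc (0:ℝ) 1, ‖A t‖ ≤ D)
    (n : ℤ)
    (hq : ∀ t ∈ Set.Icc (0:ℝ) 1, HasSum (fun m : ℤ => c m t * c (n - m) t) (q t)) :
    (∫ t in (0:ℝ)..1, (t:ℂ)^ℓ * A t * q t)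
      = ∑' m : ℤ, ∫ t in (0:ℝ)..1, (t:ℂ)^ℓ * A t * (c m t * c (n - m) t) := by
  have hCnn : 0 ≤ C := le_trans (tsum_nonneg fun m => norm_nonneg _) (hC 0 (by norm_num))
  have hcm_le : ∀ t ∈ Set.Icc (0:ℝ) 1, ∀ m : ℤ, ‖c m t‖ ≤ C := fun t ht m =>
    le_trans ((hs t ht).le_tsum m fun _ _ => norm_nonneg _) (hC t ht)
  set f : ℤ → ℝ → ℂ := fun m t => (t:ℂ)^ℓ * A t * (c m t * c (n - m) t) with hf
  have hfc : ∀ m, Continuous (f m) := fun m =>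
    ((Complex.continuous_ofReal.pow ℓ).mul hAcont).mul ((hcont m).mul (hcont (n - m)))
  have hmeas : ∀ m : ℤ, MeasureTheory.AEStronglyMeasurable (f m)
      (volume.restrict (Set.Ioc (0:ℝ) 1)) := fun m => (hfc m).aestronglyMeasurable
  have hfin : (∑' m : ℤ, ∫⁻ t in Set.Ioc (0:ℝ) 1, ‖f m t‖₊) ≠ ⊤ := by
    rw [← MeasureTheory.lintegral_tsum (fun m => ((hfc m).measurable.nnnorm.coe_nnreal_ennreal).aemeasurable)]
    have hb : ∀ t ∈ Set.Ioc (0:ℝ) 1, (∑' m : ℤ, (‖f m t‖₊ : ℝ≥0∞)) ≤ ENNReal.ofReal (D * C * C) := by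
      intro t ht
      have ht' : t ∈ Set.Icc (0:ℝ) 1 := ⟨ht.1.le, ht.2⟩
      have hnorm : ∀ m : ℤ, ‖f m t‖ ≤ D * C * ‖c m t‖ := by
        intro m
        have : ‖f m t‖ = ‖((t:ℂ))‖^ℓ * ‖A t‖ * (‖c m t‖ * ‖c (n - m) t‖) := by
          rw [hf]; simp [norm_mul, norm_pow]
        rw [this]
        have h1 : ‖((t:ℂ))‖^ℓ ≤ 1 := by
          rw [Complex.norm_real]
          refine pow_le_one₀ (norm_nonneg t) ?_
          rw [Real.norm_eq_abs, _root_.abs_of_nonneg ht.1.le]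
          exact ht.2
        calc ‖((t:ℂ))‖^ℓ * ‖A t‖ * (‖c m t‖ * ‖c (n - m) t‖)
            ≤ 1 * D * (‖c m t‖ * C) :=
              mul_le_mul (mul_le_mul h1 (hD t ht') (norm_nonneg _) zero_le_one)
                (mul_le_mul_of_nonneg_left (hcm_le t ht' (n - m)) (norm_nonneg _))
                (by positivity) (by positivity)
          _ = D * C * ‖c m t‖ := by ring
      calc (∑' m : ℤ, (‖f m t‖₊ : ℝ≥0∞))
          ≤ ∑' m : ℤ, ENNReal.ofReal (D * C * ‖c m t‖) := by
            refine ENNReal.tsum_le_tsum fun m => ?_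
            rw [show (‖f m t‖₊ : ℝ≥0∞) = ENNReal.ofReal ‖f m t‖ from (ofReal_norm (f m t)).symm]
            exact ENNReal.ofReal_le_ofReal (hnorm m)
        _ = ENNReal.ofReal (∑' m : ℤ, D * C * ‖c m t‖) := by
            rw [ENNReal.ofReal_tsum_of_nonneg (fun m => by positivity) ((hs t ht').mul_left _)]
        _ ≤ ENNReal.ofReal (D * C * C) := by
            apply ENNReal.ofReal_le_ofReal
            rw [tsum_mul_left]
            exact mul_le_mul_of_nonneg_left (hC t ht') (by positivity)
    have hIocne : volume (Set.Ioc (0:ℝ) 1) ≠ ⊤ := measure_Ioc_lt_top.ne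
    have hle : (∫⁻ t in Set.Ioc (0:ℝ) 1, ∑' m : ℤ, (‖f m t‖₊ : ℝ≥0∞))
        ≤ ENNReal.ofReal (D * C * C) * volume (Set.Ioc (0:ℝ) 1) := by
      rw [← MeasureTheory.setLIntegral_const (Set.Ioc (0:ℝ) 1) (ENNReal.ofReal (D * C * C))]
      exact MeasureTheory.setLIntegral_mono' measurableSet_Ioc hb
    exact ne_top_of_le_ne_top (ENNReal.mul_ne_top ENNReal.ofReal_ne_top hIocne) hle
  have hswap := MeasureTheory.integral_tsum hmeas hfin
  have hptw : ∀ t ∈ Set.Ioc (0:ℝ) 1, (∑' m : ℤ, f m t) = (t:ℂ)^ℓ * A t * q t := by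
    intro t ht
    exact ((hq t ⟨ht.1.le, ht.2⟩).mul_left ((t:ℂ)^ℓ * A t)).tsum_eq
  rw [intervalIntegral.integral_of_le (zero_le_one)]
  have : (∫ t in Set.Ioc (0:ℝ) 1, (t:ℂ)^ℓ * A t * q t)
      = ∫ t in Set.Ioc (0:ℝ) 1, (∑' m : ℤ, f m t) :=
    (MeasureTheory.setIntegral_congr_fun measurableSet_Ioc fun t ht => (hptw t ht).symm)
  rw [this, hswap]
  exact tsum_congr fun m => (intervalIntegral.integral_of_le (zero_le_one)).symm
end swap

/-- Linear moment equation (7.13)–(7.14) for the heat equation with local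
quadratic nonlinearity `∂u/∂t = ∂²u/∂x² + ε u²`. -/
theorem linear_moment_equation_heat_local_nonlinearity
    (ε : ℝ) (u ut ux uxx : ℝ × ℝ → ℂ)
    (hper : ∀ t x : ℝ, u (t, x + 2 * Real.pi) = u (t, x))
    (hu : Continuous u) (hux : Continuous ux)
    (hut : Continuous ut) (huxx : Continuous uxx)
    (hdt : ∀ t x : ℝ, HasDerivAt (fun s => u (s, x)) (ut (t, x)) t)
    (hdx : ∀ t x : ℝ, HasDerivAt (fun y => u (t, y)) (ux (t, x)) x)
    (hdxx : ∀ t x : ℝ, HasDerivAt (fun y => ux (t, y)) (uxx (t, x)) x)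
    (hpde : ∀ t ∈ Set.Icc (0:ℝ) 1, ∀ x : ℝ,
      ut (t, x) = uxx (t, x) + (ε : ℂ) * (u (t, x)) ^ 2)
    (hsum : ∀ t ∈ Set.Icc (0:ℝ) 1, Summable fun n : ℤ => ‖fourierCoeffHeat u n t‖)
    (hbdd : ∃ C : ℝ, ∀ t ∈ Set.Icc (0:ℝ) 1, (∑' n : ℤ, ‖fourierCoeffHeat u n t‖) ≤ C) :
    ∀ (ℓ k : ℕ) (n : Fin k → ℤ),
      (∏ j, fourierCoeffHeat u (n j) 1) - (0 : ℂ) ^ ℓ * ∏ j, fourierCoeffHeat u (n j) 0 =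
        (∫ t in (0:ℝ)..1, (ℓ : ℂ) * (t : ℂ) ^ (ℓ - 1) * ∏ j, fourierCoeffHeat u (n j) t) -
        (∑ j, ((n j : ℂ)) ^ 2) *
          (∫ t in (0:ℝ)..1, (t : ℂ) ^ ℓ * ∏ j, fourierCoeffHeat u (n j) t) +
        (ε : ℂ) * ∑ j, ∑' m : ℤ,
          ∫ t in (0:ℝ)..1, (t : ℂ) ^ ℓ *
            (∏ i ∈ Finset.univ.erase j, fourierCoeffHeat u (n i) t) *
            (fourierCoeffHeat u m t * fourierCoeffHeat u (n j - m) t) := by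
  intro ℓ k n
  obtain ⟨C, hC⟩ := hbdd
  have hCnn : 0 ≤ C := le_trans (tsum_nonneg fun m => norm_nonneg _) (hC 0 (by norm_num))
  have hcC : ∀ m : ℤ, Continuous (fourierCoeffHeat u m) := fun m => continuous_fch hu hut hdt m
  have hqC : ∀ m : ℤ, Continuous (qq u m) := fun m => continuous_qq hu hut hdt m
  have hcm_le : ∀ t ∈ Set.Icc (0:ℝ) 1, ∀ m : ℤ, ‖fourierCoeffHeat u m t‖ ≤ C := fun t ht m =>
    le_trans ((hsum t ht).le_tsum m fun _ _ => norm_nonneg _) (hC t ht)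
  set P : ℝ → ℂ := fun t => ∏ j, fourierCoeffHeat u (n j) t with hPdef
  set A : Fin k → ℝ → ℂ :=
    fun j t => ∏ i ∈ Finset.univ.erase j, fourierCoeffHeat u (n i) t with hAdef
  set D : Fin k → ℝ → ℂ :=
    fun j t => -((n j : ℂ))^2 * fourierCoeffHeat u (n j) t + (ε:ℂ) * qq u (n j) t with hDdef
  have hPc : Continuous P := continuous_finset_prod _ fun j _ => hcC (n j)
  have hAc : ∀ j, Continuous (A j) := fun j => continuous_finset_prod _ fun i _ => hcC (n i)
  have hDc : ∀ j, Continuous (D j) := fun j =>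
    (continuous_const.mul (hcC (n j))).add (continuous_const.mul (hqC (n j)))
  -- derivative of the product
  have hP' : ∀ t ∈ Set.Icc (0:ℝ) 1, HasDerivAt P (∑ j, A j t * D j t) t := by
    intro t ht
    have h := HasDerivAt.finset_prod (u := Finset.univ)
      (f := fun j s => fourierCoeffHeat u (n j) s) (f' := fun j => D j t) (x := t)
      (fun j _ => hasDerivAt_c_ode hper hu hux hut huxx hdt hdx hdxx hpde (n j) ht)
    simpa [smul_eq_mul, Finset.prod_fn] using h
  -- derivative of G t = t^ℓ * P t
  set g' : ℝ → ℂ :=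
    fun t => (ℓ:ℂ) * (t:ℂ)^(ℓ-1) * P t + (t:ℂ)^ℓ * ∑ j, A j t * D j t with hg'def
  have hG' : ∀ t ∈ Set.uIcc (0:ℝ) 1,
      HasDerivAt (fun s : ℝ => ((s:ℂ))^ℓ * P s) (g' t) t := by
    intro t ht
    rw [Set.uIcc_of_le zero_le_one] at ht
    have h1 : HasDerivAt (fun s : ℝ => ((s:ℂ))^ℓ) ((ℓ:ℂ) * (t:ℂ)^(ℓ-1)) t :=
      (hasDerivAt_pow ℓ ((t:ℝ):ℂ)).comp_ofReal
    exact h1.mul (hP' t ht)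
  have hg'c : Continuous g' :=
    ((continuous_const.mul (Complex.continuous_ofReal.pow (ℓ-1))).mul hPc).add
      ((Complex.continuous_ofReal.pow ℓ).mul
        (continuous_finset_sum _ fun j _ => (hAc j).mul (hDc j)))
  have key0 : (∫ t in (0:ℝ)..1, g' t)
      = (((1:ℝ):ℂ))^ℓ * P 1 - (((0:ℝ):ℂ))^ℓ * P 0 :=
    intervalIntegral.integral_eq_sub_of_hasDerivAt hG' (hg'c.intervalIntegrable _ _)
  have key : (∫ t in (0:ℝ)..1, g' t) = P 1 - (0:ℂ)^ℓ * P 0 := by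
    rw [key0]; push_cast; ring
  -- split the integral
  have hsplit : (∫ t in (0:ℝ)..1, g' t)
      = (∫ t in (0:ℝ)..1, (ℓ:ℂ) * (t:ℂ)^(ℓ-1) * P t)
        + ∑ j, ∫ t in (0:ℝ)..1, (t:ℂ)^ℓ * (A j t * D j t) := by
    rw [hg'def]
    rw [intervalIntegral.integral_add (f := fun t : ℝ => (ℓ:ℂ) * (t:ℂ)^(ℓ-1) * P t)
      (g := fun t : ℝ => (t:ℂ)^ℓ * ∑ j, A j t * D j t)
      (((continuous_const.mul (Complex.continuous_ofReal.pow (ℓ-1))).mul hPc).intervalIntegrable _ _)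
      (((Complex.continuous_ofReal.pow ℓ).mul
        (continuous_finset_sum _ fun j _ => (hAc j).mul (hDc j))).intervalIntegrable _ _)]
    congr 1
    have : (fun t : ℝ => (t:ℂ)^ℓ * ∑ j, A j t * D j t)
        = fun t : ℝ => ∑ j, (t:ℂ)^ℓ * (A j t * D j t) := by
      funext t; rw [Finset.mul_sum]
    rw [this, intervalIntegral.integral_finset_sum]
    intro j _
    exact (((Complex.continuous_ofReal.pow ℓ).mul ((hAc j).mul (hDc j))).intervalIntegrable _ _)
  -- per-term computation
  have hterm : ∀ j : Fin k, (∫ t in (0:ℝ)..1, (t:ℂ)^ℓ * (A j t * D j t))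
      = -(((n j):ℂ)^2) * (∫ t in (0:ℝ)..1, (t:ℂ)^ℓ * P t)
        + (ε:ℂ) * ∑' m : ℤ, ∫ t in (0:ℝ)..1, (t:ℂ)^ℓ * A j t *
            (fourierCoeffHeat u m t * fourierCoeffHeat u (n j - m) t) := by
    intro j
    have hAP : ∀ t : ℝ, A j t * fourierCoeffHeat u (n j) t = P t := fun t =>
      Finset.prod_erase_mul _ _ (Finset.mem_univ j)
    have h1 : (fun t : ℝ => (t:ℂ)^ℓ * (A j t * D j t))
        = fun t : ℝ => (-(((n j):ℂ)^2) * ((t:ℂ)^ℓ * P t))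
            + (ε:ℂ) * ((t:ℂ)^ℓ * A j t * qq u (n j) t) := by
      funext t
      rw [hDdef]
      simp only []
      rw [← hAP t]
      ring
    rw [h1, intervalIntegral.integral_add (f := fun t : ℝ => -(((n j):ℂ)^2) * ((t:ℂ)^ℓ * P t))
      (g := fun t : ℝ => (ε:ℂ) * ((t:ℂ)^ℓ * A j t * qq u (n j) t))
      ((continuous_const.mul ((Complex.continuous_ofReal.pow ℓ).mul hPc)).intervalIntegrable _ _)
      ((continuous_const.mul (((Complex.continuous_ofReal.pow ℓ).mul (hAc j)).mul
        (hqC (n j)))).intervalIntegrable _ _),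
      intervalIntegral.integral_const_mul, intervalIntegral.integral_const_mul]
    congr 1
    -- swap sum and integral
    have hswap := integral_tsum_swap (fun m t => fourierCoeffHeat u m t) (qq u (n j)) (A j) ℓ
      hcC (hAc j) hsum C (C^(Finset.univ.erase j).card) (pow_nonneg hCnn _) hC
      (fun t ht => by
        calc ‖A j t‖ ≤ ∏ i ∈ Finset.univ.erase j, ‖fourierCoeffHeat u (n i) t‖ := by
              rw [hAdef]; exact Finset.norm_prod_le _ _
          _ ≤ ∏ _i ∈ Finset.univ.erase j, C :=
              Finset.prod_le_prod (fun i _ => norm_nonneg _) (fun i _ => hcm_le t ht (n i))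
          _ = C^(Finset.univ.erase j).card := by rw [Finset.prod_const])
      (n j) (fun t ht => hasSum_qq hper hu (hsum t ht) (n j))
    rw [hswap]
  -- assemble
  rw [← key, hsplit]
  simp only [hterm]
  rw [Finset.sum_add_distrib, ← Finset.sum_mul, ← Finset.mul_sum]
  have hneg : (∑ j, -(((n j):ℂ)^2)) = -(∑ j, ((n j):ℂ)^2) := by
    rw [Finset.sum_neg_distrib]
  rw [hneg]
  ring
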